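/- Let d ≥ 2, p, q ∈ [0,1], and γ ≥ 1. Define the normalized Choi state of the depolarizing channel with parameter p on ℂ^d ⊗ ℂ^d by ρ_p := (1−p)·Φ + (p/d²)·I, where Φ is the maximally entangled state. Then the PPT-measured hockey-stick divergence satisfies E_γ^PPT(ρ_q‖ρ_p) = max{0, (1−q) − γ(1−p) + (q − γp)/d, ((d−1)/d)·(q − γp)} (equivalently, this is the PPT-measured hockey-stick channel divergence between the depolarizing channels with parameters q and p). -/

import Mathlib

noncomputable section
open Matrix ComplexOrder

/-- Bipartite complex matrices on ℂ^d ⊗ ℂ^d. -/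
abbrev BMat (d : ℕ) := Matrix (Fin d × Fin d) (Fin d × Fin d) ℂ

/-- The maximally entangled state `Φ = (1/d) Σ_{i,j} |i⟩⟨j| ⊗ |i⟩⟨j|`. -/
def maxEnt (d : ℕ) : BMat d :=
  fun p q => if p.1 = p.2 ∧ q.1 = q.2 then ((d : ℂ))⁻¹ else 0

/-- The normalized Choi state of the depolarizing channel with parameter `p`:
`ρ_p = (1−p)Φ + (p/d²)I`. -/
def depolChoi (d : ℕ) (p : ℝ) : BMat d :=
  ((1 - p : ℝ) : ℂ) • maxEnt d + ((p / (d : ℝ) ^ 2 : ℝ) : ℂ) • (1 : BMat d)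

/-- The partial transpose on the second tensor factor:
`T_B(M)((a,b),(a',b')) := M((a,b'),(a',b))`. -/
def ptB {d : ℕ} (M : BMat d) : BMat d :=
  fun p q => M (p.1, q.2) (q.1, p.2)

/-- PPT-measured hockey-stick divergence for γ ≥ 1. -/
def EgPPT {d : ℕ} (γ : ℝ) (ρ σ : BMat d) : ℝ :=
  sSup {x : ℝ | ∃ M : BMat d, M.PosSemidef ∧ ((1 : BMat d) - M).PosSemidef ∧
    (ptB M).PosSemidef ∧ ((1 : BMat d) - ptB M).PosSemidef ∧
    x = ((M * (ρ - (γ : ℂ) • σ)).trace).re}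


namespace S16
variable {d : ℕ}

def swapMat (d : ℕ) : BMat d := fun p q => if p.1 = q.2 ∧ p.2 = q.1 then 1 else 0

lemma phi_herm : (maxEnt d)ᴴ = maxEnt d := by
  ext p q
  simp only [conjTranspose_apply, maxEnt, apply_ite, star_zero, star_inv₀, RCLike.star_def,
    Complex.conj_natCast]
  by_cases h1 : p.1 = p.2 <;> by_cases h2 : q.1 = q.2 <;> simp [h1, h2]

lemma phi_sq (hd : 0 < d) : maxEnt d * maxEnt d = maxEnt d := by
  ext p q
  simp only [mul_apply, maxEnt, ite_mul, mul_ite, zero_mul, mul_zero]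
  by_cases h1 : p.1 = p.2 <;> by_cases h2 : q.1 = q.2 <;>
    simp [h1, h2, Fintype.sum_prod_type, Finset.sum_ite_eq, Finset.sum_const, Finset.card_univ,
      mul_comm, hd.ne', Nat.cast_pos.mpr hd]

lemma trace_phi (hd : 0 < d) : (maxEnt d).trace = 1 := by
  simp [Matrix.trace, Matrix.diag, maxEnt, Fintype.sum_prod_type, Finset.sum_ite_eq,
     Finset.sum_const, Finset.card_univ]
  field_simp

lemma F_herm : (swapMat d)ᴴ = swapMat d := by
  ext p q
  simp only [conjTranspose_apply, swapMat, apply_ite, star_zero, star_one]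
  by_cases h1 : q.1 = p.2 <;> by_cases h2 : q.2 = p.1 <;> simp [h1, h2] <;> tauto

lemma F_sq : swapMat d * swapMat d = 1 := by
  ext ⟨a,b⟩ ⟨c,e⟩
  simp [mul_apply, swapMat, ite_and, Fintype.sum_prod_type, Finset.sum_ite_eq,
    Finset.sum_ite_eq', one_apply, Prod.ext_iff, mul_ite, ite_mul, zero_mul, mul_zero,
    and_comm, eq_comm]

lemma trace_F : (swapMat d).trace = (d : ℂ) := by
  have h : ∀ i j : Fin d, (i = j ∧ j = i) ↔ i = j := fun i j => ⟨fun h => h.1, fun h => ⟨h, h.symm⟩⟩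
  simp only [Matrix.trace, Matrix.diag, swapMat, Fintype.sum_prod_type, h, Finset.sum_ite_eq,
    Finset.mem_univ, if_true, Finset.sum_const, Finset.card_univ, Fintype.card_fin, nsmul_eq_mul,
    mul_one]


lemma psd_of_proj {P : BMat d} (h1 : Pᴴ = P) (h2 : P * P = P) : P.PosSemidef := by
  have h : P = Pᴴ * P := by rw [h1, h2]
  rw [h]; exact posSemidef_conjTranspose_mul_self P

lemma psd_smul {M : BMat d} (h : M.PosSemidef) {c : ℝ} (hc : 0 ≤ c) :
    ((c:ℂ) • M).PosSemidef := by
  refine PosSemidef.of_dotProduct_mulVec_nonneg ?_ fun x => ?_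
  · unfold Matrix.IsHermitian
    rw [conjTranspose_smul, h.1.eq]
    congr 1
    simp
  · rw [smul_mulVec, dotProduct_smul, smul_eq_mul]
    exact mul_nonneg (Complex.zero_le_real.mpr hc) (h.dotProduct_mulVec_nonneg x)

lemma phi_psd : (maxEnt d).PosSemidef := by
  rcases Nat.eq_zero_or_pos d with h | h
  · subst h
    have : maxEnt 0 = (0 : BMat 0) := by ext ⟨a,b⟩; exact absurd a.2 (by simp)
    rw [this]; exact Matrix.PosSemidef.zero
  · exact psd_of_proj phi_herm (phi_sq h)

lemma one_sub_phi_psd (hd : 0 < d) : ((1 : BMat d) - maxEnt d).PosSemidef := by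
  refine psd_of_proj ?_ ?_
  · rw [conjTranspose_sub, conjTranspose_one, phi_herm]
  · rw [Matrix.sub_mul, Matrix.mul_sub, Matrix.mul_sub, Matrix.one_mul, Matrix.one_mul,
      Matrix.mul_one, phi_sq hd]
    abel

lemma one_add_F_psd : ((1 : BMat d) + swapMat d).PosSemidef := by
  have h : ((1 : BMat d) + swapMat d)
      = (((1:ℝ)/2 : ℝ) : ℂ) • (((1 : BMat d) + swapMat d)ᴴ * ((1 : BMat d) + swapMat d)) := by
    rw [conjTranspose_add, conjTranspose_one, F_herm, Matrix.add_mul, Matrix.mul_add,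
      Matrix.mul_add, Matrix.one_mul, Matrix.one_mul, Matrix.mul_one, F_sq]
    push_cast
    ext p q
    simp only [Matrix.smul_apply, Matrix.add_apply, Matrix.one_apply, smul_eq_mul]
    ring
  rw [h]
  exact psd_smul (posSemidef_conjTranspose_mul_self _) (by norm_num)

lemma one_sub_F_psd : ((1 : BMat d) - swapMat d).PosSemidef := by
  have h : ((1 : BMat d) - swapMat d)
      = (((1:ℝ)/2 : ℝ) : ℂ) • (((1 : BMat d) - swapMat d)ᴴ * ((1 : BMat d) - swapMat d)) := by
    rw [conjTranspose_sub, conjTranspose_one, F_herm, Matrix.sub_mul, Matrix.mul_sub,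
      Matrix.mul_sub, Matrix.one_mul, Matrix.one_mul, Matrix.mul_one, F_sq]
    push_cast
    ext p q
    simp only [Matrix.smul_apply, Matrix.sub_apply, Matrix.add_apply, Matrix.one_apply,
      smul_eq_mul]
    ring
  rw [h]
  exact psd_smul (posSemidef_conjTranspose_mul_self _) (by norm_num)

lemma ptB_add (M N : BMat d) : ptB (M + N) = ptB M + ptB N := rfl

lemma ptB_sub (M N : BMat d) : ptB (M - N) = ptB M - ptB N := rfl

lemma ptB_smul (c : ℂ) (M : BMat d) : ptB (c • M) = c • ptB M := rfl

lemma ptB_one : ptB (1 : BMat d) = 1 := by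
  ext ⟨a,b⟩ ⟨c,e⟩
  simp only [ptB, Matrix.one_apply, Prod.mk.injEq]
  by_cases h1 : a = c <;> by_cases h2 : b = e <;> simp [h1, h2, eq_comm]

lemma ptB_phi : ptB (maxEnt d) = ((d:ℂ))⁻¹ • swapMat d := by
  ext ⟨a,b⟩ ⟨c,e⟩
  simp only [ptB, maxEnt, swapMat, Matrix.smul_apply, smul_eq_mul, mul_ite, mul_one, mul_zero]
  by_cases h1 : a = e <;> by_cases h2 : b = c <;> simp [h1, h2, eq_comm]

lemma ptB_zero : ptB (0 : BMat d) = 0 := rfl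

lemma trace_ptB (M : BMat d) : (ptB M).trace = M.trace := rfl

lemma trace_mul_swap (M : BMat d) (hd : 0 < d) :
    (ptB M * swapMat d).trace = (d : ℂ) * (M * maxEnt d).trace := by
  have h1 : (ptB M * swapMat d).trace = ∑ i : Fin d, ∑ j : Fin d, M (i,i) (j,j) := by
    simp only [Matrix.trace, Matrix.diag, mul_apply, ptB, swapMat, Fintype.sum_prod_type,
      mul_ite, mul_one, mul_zero, ite_and]
    refine Eq.trans (Finset.sum_congr rfl fun x _ =>
      Finset.sum_congr rfl fun y _ => Finset.sum_comm) ?_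
    simp only [Finset.sum_ite_eq, Finset.sum_ite_eq', Finset.mem_univ, if_true]
  have h2 : (M * maxEnt d).trace = ((d:ℂ))⁻¹ * ∑ i : Fin d, ∑ j : Fin d, M (i,i) (j,j) := by
    simp only [Matrix.trace, Matrix.diag, mul_apply, maxEnt, Fintype.sum_prod_type,
      mul_ite, mul_zero, ite_and, Finset.sum_ite_eq, Finset.mem_univ, if_true]
    refine Eq.trans (Finset.sum_congr rfl fun x _ => Finset.sum_comm) ?_
    simp only [Finset.sum_ite_eq, Finset.sum_ite_eq', Finset.mem_univ, if_true]
    rw [Finset.mul_sum]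
    refine Finset.sum_congr rfl fun i _ => ?_
    rw [Finset.mul_sum]
    refine Finset.sum_congr rfl fun j _ => ?_
    ring
  rw [h1, h2, ← mul_assoc, mul_inv_cancel₀ (by exact_mod_cast hd.ne'), one_mul]

lemma trace_psd_nonneg {X : BMat d} (hX : X.PosSemidef) : 0 ≤ X.trace := by
  have h : ∀ p, 0 ≤ X p p := by
    intro p
    exact hX.diag_nonneg
  exact Finset.sum_nonneg fun p _ => h p

lemma trace_mul_psd_nonneg {A B : BMat d} (hA : A.PosSemidef) (hB : B.PosSemidef) :
    0 ≤ ((A * B).trace).re := by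
  obtain ⟨C, hC⟩ : ∃ C : BMat d, A = Cᴴ * C := by
    open scoped MatrixOrder in
    exact CStarAlgebra.nonneg_iff_eq_star_mul_self.mp hA.nonneg
  have h1 : (A * B).trace = (C * B * Cᴴ).trace := by
    rw [hC, Matrix.mul_assoc, Matrix.trace_mul_comm, Matrix.mul_assoc]
  rw [h1]
  have h2 := trace_psd_nonneg (hB.mul_mul_conjTranspose_same C)
  exact (Complex.le_def.mp h2).1

lemma lp {dr t s a b : ℝ} (hd : 2 ≤ dr) (ht0 : 0 ≤ t) (ht1 : t ≤ 1)
    (h1 : dr*t ≤ s) (h2 : s ≤ dr*t + dr*(dr-1)) (hab : a + b*dr^2 ≤ 0) :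
    a*t + b*s ≤ max 0 (max (a + b*dr) (b*dr*(dr-1))) := by
  rcases le_or_gt 0 b with hb | hb
  · have key : a*t + b*s ≤ (a+b*dr)*t + b*dr*(dr-1) := by nlinarith
    rcases le_or_gt 0 (a + b*dr) with h | h
    · have h3 : (a+b*dr)*t + b*dr*(dr-1) ≤ 0 := by nlinarith
      linarith [le_max_left (0:ℝ) (max (a + b*dr) (b*dr*(dr-1)))]
    · have h3 : (a+b*dr)*t + b*dr*(dr-1) ≤ b*dr*(dr-1) := by nlinarith
      have := le_max_right (a + b*dr) (b*dr*(dr-1))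
      have := le_max_right (0:ℝ) (max (a + b*dr) (b*dr*(dr-1)))
      linarith
  · have key : a*t + b*s ≤ (a+b*dr)*t := by nlinarith
    rcases le_or_gt 0 (a + b*dr) with h | h
    · have h3 : (a+b*dr)*t ≤ a+b*dr := by nlinarith
      have h4 := le_max_left (a + b*dr) (b*dr*(dr-1))
      have := le_max_right (0:ℝ) (max (a + b*dr) (b*dr*(dr-1)))
      linarith
    · have h3 : (a+b*dr)*t ≤ 0 := by nlinarith
      linarith [le_max_left (0:ℝ) (max (a + b*dr) (b*dr*(dr-1)))]


lemma trace_one' : (1 : BMat d).trace = ((d:ℂ))^2 := by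
  rw [Matrix.trace_one]
  simp [Fintype.card_prod, Fintype.card_fin]
  ring

end S16

open S16

/-- PPT-measured hockey-stick divergence between Choi states of depolarizing channels. -/
theorem stmt_16 (d : ℕ) (hd : 2 ≤ d) (p q : ℝ)
    (hp : p ∈ Set.Icc (0 : ℝ) 1) (hq : q ∈ Set.Icc (0 : ℝ) 1)
    (γ : ℝ) (hγ : 1 ≤ γ) :
    EgPPT γ (depolChoi d q) (depolChoi d p) =
      max 0 (max ((1 - q) - γ * (1 - p) + (q - γ * p) / d)
        (((d - 1 : ℝ) / d) * (q - γ * p))) := by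
  obtain ⟨hp0, hp1⟩ := hp
  obtain ⟨hq0, hq1⟩ := hq
  have hd0 : 0 < d := by omega
  have hdR : (2:ℝ) ≤ (d:ℝ) := by exact_mod_cast hd
  have hdne : ((d:ℝ)) ≠ 0 := by linarith
  have hd1ne : ((d:ℝ)) + 1 ≠ 0 := by linarith
  have hdCne : ((d:ℂ)) ≠ 0 := by exact_mod_cast hd0.ne'
  have hdC1ne : ((d:ℂ)) + 1 ≠ 0 := by
    intro h
    have : ((d:ℝ)) + 1 = 0 := by exact_mod_cast congrArg Complex.re h
    exact hd1ne this
  set a : ℝ := (1-q) - γ*(1-p) with ha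
  set b : ℝ := q/(d:ℝ)^2 - γ*(p/(d:ℝ)^2) with hb
  -- decomposition of the difference state
  have hD : depolChoi d q - (γ:ℂ) • depolChoi d p
      = (a:ℂ) • maxEnt d + (b:ℂ) • (1 : BMat d) := by
    unfold depolChoi
    rw [ha, hb]
    push_cast
    module
  -- objective formula
  have hObj : ∀ M : BMat d,
      ((M * (depolChoi d q - (γ:ℂ) • depolChoi d p)).trace).re
        = a * ((M * maxEnt d).trace).re + b * (M.trace).re := by
    intro M
    rw [hD, Matrix.mul_add, Matrix.mul_smul, Matrix.mul_smul, Matrix.mul_one,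
      trace_add, trace_smul, trace_smul]
    simp only [smul_eq_mul, Complex.add_re, Complex.mul_re, Complex.ofReal_re,
      Complex.ofReal_im, zero_mul, sub_zero]
  -- coefficients
  set c1 : ℝ := (d:ℝ)/((d:ℝ)+1) with hc1
  set c2 : ℝ := 1/((d:ℝ)+1) with hc2
  set c5 : ℝ := ((d:ℝ)-1)/((d:ℝ)+1) with hc5
  have hc1nn : 0 ≤ c1 := by rw [hc1]; positivity
  have hc2nn : 0 ≤ c2 := by rw [hc2]; positivity
  have hc5nn : 0 ≤ c5 := by rw [hc5]; apply div_nonneg <;> linarith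
  have i1 : ((c1:ℝ):ℂ) = 1 - ((c2:ℝ):ℂ) := by
    rw [hc1, hc2]; push_cast; field_simp; ring
  have i2 : ((c1:ℝ):ℂ) * ((d:ℂ))⁻¹ = ((c2:ℝ):ℂ) := by
    rw [hc1, hc2]; push_cast; field_simp
  have i3 : ((c5:ℝ):ℂ) = 1 - 2*((c2:ℝ):ℂ) := by
    rw [hc5, hc2]; push_cast; field_simp; ring
  -- witness matrices
  set M1 : BMat d := (c1:ℂ) • maxEnt d + (c2:ℂ) • (1 : BMat d) with hM1
  set M2 : BMat d := (c1:ℂ) • ((1 : BMat d) - maxEnt d) with hM2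
  have e1 : (1 : BMat d) - M1 = (c1:ℂ) • ((1 : BMat d) - maxEnt d) := by
    rw [hM1, i1]; module
  have e2 : ptB M1 = (c2:ℂ) • ((1 : BMat d) + swapMat d) := by
    rw [hM1, ptB_add, ptB_smul, ptB_smul, ptB_one, ptB_phi, smul_smul, i2]
    module
  have e3 : (1 : BMat d) - ptB M1
      = (c5:ℂ) • (1 : BMat d) + (c2:ℂ) • ((1 : BMat d) - swapMat d) := by
    rw [e2, i3]; module
  have f1 : (1 : BMat d) - M2 = (c2:ℂ) • (1 : BMat d) + (c1:ℂ) • maxEnt d := by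
    rw [hM2, i1]; module
  have f2 : ptB M2 = (c5:ℂ) • (1 : BMat d) + (c2:ℂ) • ((1 : BMat d) - swapMat d) := by
    rw [hM2, ptB_smul, ptB_sub, ptB_one, ptB_phi, smul_sub, smul_smul, i2, i3, i1]
    module
  have f3 : (1 : BMat d) - ptB M2 = (c2:ℂ) • ((1 : BMat d) + swapMat d) := by
    rw [f2, i3]; module
  -- PSD facts
  have psdM1 : M1.PosSemidef := by
    rw [hM1]; exact (psd_smul phi_psd hc1nn).add (psd_smul Matrix.PosSemidef.one hc2nn)
  have psdM1' : ((1 : BMat d) - M1).PosSemidef := by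
    rw [e1]; exact psd_smul (one_sub_phi_psd hd0) hc1nn
  have psdM1p : (ptB M1).PosSemidef := by
    rw [e2]; exact psd_smul one_add_F_psd hc2nn
  have psdM1p' : ((1 : BMat d) - ptB M1).PosSemidef := by
    rw [e3]
    exact (psd_smul Matrix.PosSemidef.one hc5nn).add (psd_smul one_sub_F_psd hc2nn)
  have psdM2 : M2.PosSemidef := by
    rw [hM2]; exact psd_smul (one_sub_phi_psd hd0) hc1nn
  have psdM2' : ((1 : BMat d) - M2).PosSemidef := by
    rw [f1]; exact (psd_smul Matrix.PosSemidef.one hc2nn).add (psd_smul phi_psd hc1nn)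
  have psdM2p : (ptB M2).PosSemidef := by
    rw [f2]
    exact (psd_smul Matrix.PosSemidef.one hc5nn).add (psd_smul one_sub_F_psd hc2nn)
  have psdM2p' : ((1 : BMat d) - ptB M2).PosSemidef := by
    rw [f3]; exact psd_smul one_add_F_psd hc2nn
  -- traces of witnesses
  have trM1phi : (M1 * maxEnt d).trace = ((c1 + c2 : ℝ) : ℂ) := by
    rw [hM1, Matrix.add_mul, Matrix.smul_mul, Matrix.smul_mul, Matrix.one_mul,
      phi_sq hd0, trace_add, trace_smul, trace_smul, trace_phi hd0]
    push_cast [smul_eq_mul]; ring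
  have trM1 : M1.trace = ((c1 + c2 * (d:ℝ)^2 : ℝ) : ℂ) := by
    rw [hM1, trace_add, trace_smul, trace_smul, trace_phi hd0, trace_one']
    push_cast [smul_eq_mul]; ring
  have trM2phi : (M2 * maxEnt d).trace = ((0 : ℝ) : ℂ) := by
    rw [hM2, Matrix.smul_mul, Matrix.sub_mul, Matrix.one_mul, phi_sq hd0, sub_self,
      smul_zero, trace_zero]
    norm_num
  have trM2 : M2.trace = ((c1 * ((d:ℝ)^2 - 1) : ℝ) : ℂ) := by
    rw [hM2, trace_smul, trace_sub, trace_one', trace_phi hd0]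
    push_cast [smul_eq_mul]; ring
  -- abbreviations for the target values
  set A1 : ℝ := (1 - q) - γ * (1 - p) + (q - γ * p) / d with hA1
  set B1 : ℝ := ((d:ℝ) - 1) / d * (q - γ * p) with hB1
  have ha1' : a + b * (d:ℝ) = A1 := by
    rw [ha, hb, hA1]; field_simp
  have hb1' : b * (d:ℝ) * ((d:ℝ) - 1) = B1 := by
    rw [hb, hB1]; field_simp
  have hab : a + b * (d:ℝ)^2 ≤ 0 := by
    have hbd2 : b * (d:ℝ)^2 = q - γ*p := by rw [hb]; field_simp
    rw [ha, hbd2]; linarith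
  -- upper bound for every feasible element
  have hub : ∀ x ∈ {x : ℝ | ∃ M : BMat d, M.PosSemidef ∧ ((1 : BMat d) - M).PosSemidef ∧
      (ptB M).PosSemidef ∧ ((1 : BMat d) - ptB M).PosSemidef ∧
      x = ((M * (depolChoi d q - (γ : ℂ) • depolChoi d p)).trace).re},
      x ≤ max 0 (max A1 B1) := by
    rintro x ⟨M, hM, h1M, hpM, h1pM, rfl⟩
    rw [hObj M]
    set t : ℝ := ((M * maxEnt d).trace).re with hts
    set s : ℝ := (M.trace).re with hss
    have ht0 : 0 ≤ t := trace_mul_psd_nonneg hM phi_psd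
    have ht1 : t ≤ 1 := by
      have h := trace_mul_psd_nonneg h1M phi_psd
      have e : (((1 : BMat d) - M) * maxEnt d).trace
          = (maxEnt d).trace - (M * maxEnt d).trace := by
        rw [Matrix.sub_mul, Matrix.one_mul, trace_sub]
      rw [e, trace_phi hd0] at h
      simp only [Complex.sub_re, Complex.one_re] at h
      linarith
    have hst : (d:ℝ) * t ≤ s := by
      have h := trace_mul_psd_nonneg hpM one_sub_F_psd
      have e : (ptB M * ((1 : BMat d) - swapMat d)).trace
          = M.trace - (d:ℂ) * (M * maxEnt d).trace := by
        rw [Matrix.mul_sub, Matrix.mul_one, trace_sub, trace_ptB, trace_mul_swap M hd0]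
      rw [e] at h
      simp only [Complex.sub_re, Complex.mul_re, Complex.natCast_re, Complex.natCast_im,
        zero_mul, sub_zero] at h
      linarith
    have hs2 : s ≤ (d:ℝ) * t + (d:ℝ) * ((d:ℝ) - 1) := by
      have h := trace_mul_psd_nonneg h1pM one_sub_F_psd
      have e : (((1 : BMat d) - ptB M) * ((1 : BMat d) - swapMat d)).trace
          = (((d:ℝ)^2 - (d:ℝ) : ℝ) : ℂ) - (M.trace - (d:ℂ) * (M * maxEnt d).trace) := by
        rw [Matrix.sub_mul, Matrix.one_mul, Matrix.mul_sub, Matrix.mul_one, trace_sub,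
          trace_sub, trace_sub, trace_one', trace_F, trace_ptB, trace_mul_swap M hd0]
        push_cast; ring
      rw [e] at h
      simp only [Complex.sub_re, Complex.mul_re, Complex.natCast_re, Complex.natCast_im,
        zero_mul, sub_zero, Complex.ofReal_re] at h
      linarith
    rw [← ha1', ← hb1']
    exact lp hdR ht0 ht1 hst hs2 hab
  have h0mem : (0:ℝ) ∈ {x : ℝ | ∃ M : BMat d, M.PosSemidef ∧ ((1 : BMat d) - M).PosSemidef ∧
      (ptB M).PosSemidef ∧ ((1 : BMat d) - ptB M).PosSemidef ∧
      x = ((M * (depolChoi d q - (γ : ℂ) • depolChoi d p)).trace).re} := by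
    refine ⟨0, Matrix.PosSemidef.zero, by rw [sub_zero]; exact Matrix.PosSemidef.one,
      by rw [ptB_zero]; exact Matrix.PosSemidef.zero,
      by rw [ptB_zero, sub_zero]; exact Matrix.PosSemidef.one, ?_⟩
    rw [Matrix.zero_mul, trace_zero]
    simp
  have hA1mem : A1 ∈ {x : ℝ | ∃ M : BMat d, M.PosSemidef ∧ ((1 : BMat d) - M).PosSemidef ∧
      (ptB M).PosSemidef ∧ ((1 : BMat d) - ptB M).PosSemidef ∧
      x = ((M * (depolChoi d q - (γ : ℂ) • depolChoi d p)).trace).re} := by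
    refine ⟨M1, psdM1, psdM1', psdM1p, psdM1p', ?_⟩
    rw [hObj M1, trM1phi, trM1, Complex.ofReal_re, Complex.ofReal_re, hA1, ha, hb,
      hc1, hc2]
    field_simp
    ring
  have hB1mem : B1 ∈ {x : ℝ | ∃ M : BMat d, M.PosSemidef ∧ ((1 : BMat d) - M).PosSemidef ∧
      (ptB M).PosSemidef ∧ ((1 : BMat d) - ptB M).PosSemidef ∧
      x = ((M * (depolChoi d q - (γ : ℂ) • depolChoi d p)).trace).re} := by
    refine ⟨M2, psdM2, psdM2', psdM2p, psdM2p', ?_⟩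
    rw [hObj M2, trM2phi, trM2, Complex.ofReal_re, Complex.ofReal_re, hB1, hb, hc1]
    field_simp
    ring
  have hbdd : BddAbove {x : ℝ | ∃ M : BMat d, M.PosSemidef ∧ ((1 : BMat d) - M).PosSemidef ∧
      (ptB M).PosSemidef ∧ ((1 : BMat d) - ptB M).PosSemidef ∧
      x = ((M * (depolChoi d q - (γ : ℂ) • depolChoi d p)).trace).re} :=
    ⟨max 0 (max A1 B1), hub⟩
  rw [EgPPT]
  refine le_antisymm (csSup_le ⟨0, h0mem⟩ hub) ?_
  exact max_le (le_csSup hbdd h0mem) (max_le (le_csSup hbdd hA1mem) (le_csSup hbdd hB1mem))
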